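/- Let K_1 = {-1, 0, 1} ⊂ R and K_2 = {-3/√13, 3/√13} ⊂ R. Both the identity map and the projective transformation φ(x) = x/(3-x) fit the centroids: γ(K_1) = γ(K_2) = 0, and γ(φ(K_1)) = γ(φ(K_2)) = 1/12. Moreover φ is not affine. -/

import Mathlib

/-- for `K₁ = {-1,0,1}` and `K₂ = {-3/√13, 3/√13}` in `ℝ`, both
the identity and the non-affine projective map `φ(x) = x/(3-x)` fit the
centroids: the centroids of `K₁`, `K₂` are both `0`, and the centroids of
`φ(K₁)`, `φ(K₂)` are both `1/12`. -/
theorem nonuniqueness_example_on_line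
    (φ : ℝ → ℝ) (hφ : ∀ x : ℝ, φ x = x / (3 - x)) :
    ((-1 : ℝ) + 0 + 1) / 3 = 0 ∧
    ((-3 / Real.sqrt 13) + 3 / Real.sqrt 13) / 2 = 0 ∧
    (φ (-1) + φ 0 + φ 1) / 3 = 1 / 12 ∧
    (φ (-3 / Real.sqrt 13) + φ (3 / Real.sqrt 13)) / 2 = 1 / 12 ∧
    ¬∃ a b : ℝ, ∀ x : ℝ, x < 3 → φ x = a * x + b := by
  have hs : Real.sqrt 13 ^ 2 = 13 := Real.sq_sqrt (by norm_num)
  have hspos : (0:ℝ) < Real.sqrt 13 := Real.sqrt_pos.mpr (by norm_num)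
  have hs1 : (1:ℝ) < Real.sqrt 13 := by nlinarith
  refine ⟨by norm_num, by ring, ?_, ?_, ?_⟩
  · simp only [hφ]; norm_num
  · simp only [hφ]
    have hne : Real.sqrt 13 ≠ 0 := ne_of_gt hspos
    have h3 : 3 * Real.sqrt 13 + 3 ≠ 0 := by nlinarith
    have h4 : 3 * Real.sqrt 13 - 3 ≠ 0 := by nlinarith
    have h1 : (3 : ℝ) - -3 / Real.sqrt 13 ≠ 0 := by
      have : (0:ℝ) < 3 / Real.sqrt 13 := by positivity
      intro h; rw [neg_div] at h; linarith
    have h2 : (3 : ℝ) - 3 / Real.sqrt 13 ≠ 0 := by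
      have : 3 / Real.sqrt 13 < 3 := by
        rw [div_lt_iff₀ hspos]; nlinarith
      linarith
    field_simp
    have h5 : Real.sqrt 13 - -1 ≠ 0 := ne_of_gt (by linarith)
    have h6 : Real.sqrt 13 - 1 ≠ 0 := ne_of_gt (by linarith)
    field_simp
    nlinarith [hs, hspos]
  · rintro ⟨a, b, h⟩
    have h0 := h 0 (by norm_num)
    have h1 := h 1 (by norm_num)
    have h2 := h 2 (by norm_num)
    rw [hφ] at h0 h1 h2
    norm_num at h0 h1 h2
    linarith
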